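/- Let W ∈ O_𝔚 be a highest weight 𝔚-module with highest weight vector w₀ of highest weight b' ≠ 0, and let a ∈ ℂ. Then L₀(a, b') = span{d₁^i · (w₀ ⊗ t^{2j}) : i ∈ ℤ≥0, j ∈ ℤ} and L₁(a, b') = span{d₁^i · (w₀ ⊗ t^{2j+1}) : i ∈ ℤ≥0, j ∈ ℤ} are Virasoro submodules of L(W, −1, a, b' + 1), and L(W, −1, a, b' + 1) = L₀(a, b') ⊕ L₁(a, b'). -/

import Mathlib

/-- A representation of the Witt algebra `𝔚 = span{d_i : i ≥ -1}`, encoded by the family of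
operators `d i` (only the indices `i ≥ -1` are relevant) satisfying
`[d_m, d_n] = (n - m) d_{m+n}`. -/
structure WittRep (W : Type*) [AddCommGroup W] [Module ℂ W] where
  d : ℤ → W →ₗ[ℂ] W
  comm : ∀ m n : ℤ, -1 ≤ m → -1 ≤ n →
    d m ∘ₗ d n - d n ∘ₗ d m = (((n - m : ℤ) : ℂ)) • d (m + n)

namespace WittRep

variable {W : Type*} [AddCommGroup W] [Module ℂ W]

/-- Condition A : the module lies in the category `O_𝔚`. -/
def InO (ρ : WittRep W) : Prop :=
  ∀ v : W, ∃ n : ℕ, ∀ i : ℤ, (n : ℤ) ≤ i → ρ.d i v = 0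

/-- The module is trivial: the Lie algebra acts by zero. -/
def IsTrivial (ρ : WittRep W) : Prop := ∀ i : ℤ, -1 ≤ i → ρ.d i = 0

/-- A `𝔚`-submodule. -/
def Invariant (ρ : WittRep W) (U : Submodule ℂ W) : Prop :=
  ∀ i : ℤ, -1 ≤ i → ∀ u ∈ U, ρ.d i u ∈ U

/-- Simplicity of a `𝔚`-module. -/
def IsSimple (ρ : WittRep W) : Prop :=
  (∃ v : W, v ≠ 0) ∧ ∀ U : Submodule ℂ W, ρ.Invariant U → U = ⊥ ∨ U = ⊤

/-- A `𝔟`-submodule (`𝔟 = span{d_i : i ≥ 0}`). -/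
def BInvariant (ρ : WittRep W) (U : Submodule ℂ W) : Prop :=
  ∀ i : ℤ, 0 ≤ i → ∀ u ∈ U, ρ.d i u ∈ U

/-- The socle `Soc_𝔟(W)`: the sum of the minimal nonzero `𝔟`-submodules. -/
def Soc (ρ : WittRep W) : Submodule ℂ W :=
  sSup {U | ρ.BInvariant U ∧ U ≠ ⊥ ∧
    ∀ U' : Submodule ℂ W, ρ.BInvariant U' → U' ≠ ⊥ → U' ≤ U → U' = U}

/-- `w₀` is a highest weight vector of weight `b'`. -/
def IsHW (ρ : WittRep W) (w₀ : W) (b' : ℂ) : Prop :=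
  w₀ ≠ 0 ∧ ρ.d 0 w₀ = b' • w₀ ∧ ∀ i : ℤ, 1 ≤ i → ρ.d i w₀ = 0

/-- `w₀` generates the `𝔚`-module. -/
def Generates (ρ : WittRep W) (w₀ : W) : Prop :=
  ∀ U : Submodule ℂ W, ρ.Invariant U → w₀ ∈ U → U = ⊤

/-- The operator `e^{kt} d/dt = Σ_{i ≥ 0} (k^i/i!) d_{i-1}` (a finite sum on each vector of a
module in `O_𝔚`). -/
noncomputable def E (ρ : WittRep W) (k : ℤ) (w : W) : W :=
  ∑ᶠ i : ℕ, (((k : ℂ) ^ i) / (Nat.factorial i : ℂ)) • ρ.d ((i : ℤ) - 1) w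

/-- The action of `d_k` on `L(W, λ, a, b) = W ⊗ ℂ[t, t⁻¹]`, realized on `ℤ →₀ W`
(`w ⊗ t^j ↦ Finsupp.single j w`):
`d_k · (w ⊗ t^j) = ((λ^k e^{kt} − 1) d/dt + a + kb + j) w ⊗ t^{k+j}`. -/
noncomputable def Lact (ρ : WittRep W) (lam a b : ℂ) (k : ℤ) (f : ℤ →₀ W) : ℤ →₀ W :=
  f.sum fun j w => Finsupp.single (k + j)
    (lam ^ k • ρ.E k w - ρ.d (-1) w + (a + (k : ℂ) * b + (j : ℂ)) • w)

/-- The PBW map `ℕ →₀ ℂ → W`, `(k, c) ↦ c • d_{-1}^k w₀`. -/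
noncomputable def pbwMap (ρ : WittRep W) (w₀ : W) : (ℕ →₀ ℂ) →ₗ[ℂ] W :=
  Finsupp.lsum ℂ fun k : ℕ => ((ρ.d (-1)) ^ k) ∘ₗ LinearMap.toSpanSingleton ℂ W w₀

/-- `W` is the Verma `𝔚`-module with highest weight vector `w₀` of highest weight `b'`. -/
def IsVerma (ρ : WittRep W) (w₀ : W) (b' : ℂ) : Prop :=
  ρ.d 0 w₀ = b' • w₀ ∧ (∀ i : ℤ, 1 ≤ i → ρ.d i w₀ = 0) ∧
    Function.Bijective (ρ.pbwMap w₀)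

/-- `W^{(n)} = Σ_{i=0}^n d_{-1}^i (Soc_𝔟 W)`. -/
noncomputable def Wn (ρ : WittRep W) (n : ℕ) : Submodule ℂ W :=
  ⨆ i : Fin (n + 1), Submodule.map ((ρ.d (-1)) ^ (i : ℕ)) ρ.Soc

/-- `L₀(a, b') = span{d₁^i · (w₀ ⊗ t^{2j})} ⊆ L(W, -1, a, b' + 1)`. -/
noncomputable def Lzero (ρ : WittRep W) (a b' : ℂ) (w₀ : W) : Submodule ℂ (ℤ →₀ W) :=
  Submodule.span ℂ
    {g | ∃ (i : ℕ) (j : ℤ), g = (ρ.Lact (-1) a (b' + 1) 1)^[i] (Finsupp.single (2 * j) w₀)}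

/-- `L₁(a, b') = span{d₁^i · (w₀ ⊗ t^{2j+1})} ⊆ L(W, -1, a, b' + 1)`. -/
noncomputable def Lone (ρ : WittRep W) (a b' : ℂ) (w₀ : W) : Submodule ℂ (ℤ →₀ W) :=
  Submodule.span ℂ
    {g | ∃ (i : ℕ) (j : ℤ), g = (ρ.Lact (-1) a (b' + 1) 1)^[i] (Finsupp.single (2 * j + 1) w₀)}

end WittRep

/-- A representation of the Lie algebra `𝔟 = span{d_i : i ≥ 0}`. -/
structure BRep (B : Type*) [AddCommGroup B] [Module ℂ B] where
  d : ℕ → B →ₗ[ℂ] B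
  comm : ∀ m n : ℕ, d m ∘ₗ d n - d n ∘ₗ d m = (((n : ℂ) - (m : ℂ))) • d (m + n)

namespace BRep

variable {B : Type*} [AddCommGroup B] [Module ℂ B]

/-- Condition A : the module lies in the category `O_𝔟`. -/
def InO (ρ : BRep B) : Prop := ∀ v : B, ∃ n : ℕ, ∀ i : ℕ, n ≤ i → ρ.d i v = 0

def IsTrivial (ρ : BRep B) : Prop := ∀ i : ℕ, ρ.d i = 0

def IsSimple (ρ : BRep B) : Prop :=
  (∃ v : B, v ≠ 0) ∧
    ∀ U : Submodule ℂ B, (∀ i : ℕ, ∀ u ∈ U, ρ.d i u ∈ U) → U = ⊥ ∨ U = ⊤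

/-- The set of `r ∈ ℤ≥0` such that `d_{r+i} v = 0` for all `i ≥ 1`;
`ord_𝔟(v)` is its least element. -/
def ordSet (ρ : BRep B) (v : B) : Set ℕ := {r : ℕ | ∀ i : ℕ, r + 1 ≤ i → ρ.d i v = 0}

/-- The action of `d_m` on the Virasoro module `N(B_(c), a) = B ⊗ ℂ[t, t⁻¹]`, realized on
`ℤ →₀ B`:  `d_m · (w ⊗ t^j) = (Σ_{i≥1} (m^i/i!) d_{i-1} + mc + a + j) w ⊗ t^{m+j}`
(`c` is the twist of the `d₀`-action; `c = 0` gives `N(B, a)`). -/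
noncomputable def Nact (ρ : BRep B) (a c : ℂ) (m : ℤ) (f : ℤ →₀ B) : ℤ →₀ B :=
  f.sum fun j w => Finsupp.single (m + j)
    ((∑ᶠ i : ℕ, (((m : ℂ) ^ (i + 1)) / (Nat.factorial (i + 1) : ℂ)) • ρ.d i w) +
      ((m : ℂ) * c + a + (j : ℂ)) • w)

end BRep

/-- For a family `U : ℤ → Submodule ℂ W`, the subspace `⊕_j U j ⊗ t^j` of `W ⊗ ℂ[t,t⁻¹]`. -/
def gradedSub {W : Type*} [AddCommGroup W] [Module ℂ W] (U : ℤ → Submodule ℂ W) :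
    Submodule ℂ (ℤ →₀ W) where
  carrier := {f | ∀ j, f j ∈ U j}
  add_mem' := fun hf hg j => by
    simpa only [Finsupp.add_apply] using (U j).add_mem (hf j) (hg j)
  zero_mem' := fun j => by simp
  smul_mem' := fun c f hf j => by
    simpa only [Finsupp.smul_apply] using (U j).smul_mem c (hf j)

/-- A submodule invariant under a (ℤ-indexed) family of operators. -/
def ActInvariant {V : Type*} [AddCommGroup V] [Module ℂ V] (act : ℤ → V → V)
    (M : Submodule ℂ V) : Prop :=
  ∀ k : ℤ, ∀ u ∈ M, act k u ∈ M

/-- Simplicity of the module given by a family of operators (the central element acts by zero). -/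
def ActSimple {V : Type*} [AddCommGroup V] [Module ℂ V] (act : ℤ → V → V) : Prop :=
  (∃ v : V, v ≠ 0) ∧ ∀ M : Submodule ℂ V, ActInvariant act M → M = ⊥ ∨ M = ⊤

/-- A representation of the Virasoro algebra. -/
structure VirasoroRep (V : Type*) [AddCommGroup V] [Module ℂ V] where
  d : ℤ → V →ₗ[ℂ] V
  z : V →ₗ[ℂ] V
  comm : ∀ m n : ℤ, d m ∘ₗ d n - d n ∘ₗ d m =
    (((n - m : ℤ) : ℂ)) • d (m + n) +
      (if m + n = 0 then (((n : ℂ) ^ 3 - (n : ℂ)) / 12) else 0) • z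
  comm_z : ∀ m : ℤ, d m ∘ₗ z = z ∘ₗ d m

open Finset

namespace WittRep

variable {W : Type*} [AddCommGroup W] [Module ℂ W] (ρ : WittRep W)

lemma comm_apply (m n : ℤ) (hm : -1 ≤ m) (hn : -1 ≤ n) (v : W) :
    ρ.d m (ρ.d n v) - ρ.d n (ρ.d m v) = ((n - m : ℤ) : ℂ) • ρ.d (m + n) v := by
  have := congrArg (fun L : W →ₗ[ℂ] W => L v) (ρ.comm m n hm hn)
  simpa using this

lemma E_eq_sum (k : ℤ) (v : W) (N : ℕ) (hN : ∀ i : ℤ, (N : ℤ) ≤ i → ρ.d i v = 0) :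
    ρ.E k v = ∑ i ∈ Finset.range (N + 1),
      (((k : ℂ) ^ i) / (Nat.factorial i : ℂ)) • ρ.d ((i : ℤ) - 1) v := by
  apply finsum_eq_finset_sum_of_support_subset
  intro i hi
  simp only [Function.mem_support] at hi
  simp only [Finset.coe_range, Set.mem_Iio]
  by_contra h
  push_neg at h
  have : ((N : ℤ)) ≤ (i : ℤ) - 1 := by omega
  rw [hN _ this, smul_zero] at hi
  exact hi rfl

lemma E_zero (k : ℤ) : ρ.E k (0 : W) = 0 := by
  simp [WittRep.E]

lemma E_add (hO : ρ.InO) (k : ℤ) (u v : W) : ρ.E k (u + v) = ρ.E k u + ρ.E k v := by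
  obtain ⟨N₁, h₁⟩ := hO u
  obtain ⟨N₂, h₂⟩ := hO v
  have h3 : ∀ i : ℤ, ((N₁ ⊔ N₂ : ℕ) : ℤ) ≤ i → ρ.d i (u + v) = 0 := by
    intro i hi
    rw [map_add, h₁ i (by push_cast at hi ⊢; omega), h₂ i (by push_cast at hi ⊢; omega), add_zero]
  rw [ρ.E_eq_sum k (u+v) (N₁ ⊔ N₂) h3,
    ρ.E_eq_sum k u (N₁ ⊔ N₂) (fun i hi => h₁ i (by push_cast at hi ⊢; omega)),
    ρ.E_eq_sum k v (N₁ ⊔ N₂) (fun i hi => h₂ i (by push_cast at hi ⊢; omega)),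
    ← Finset.sum_add_distrib]
  exact Finset.sum_congr rfl fun i _ => by rw [map_add, smul_add]

lemma E_smul (hO : ρ.InO) (k : ℤ) (c : ℂ) (v : W) : ρ.E k (c • v) = c • ρ.E k v := by
  obtain ⟨N, h⟩ := hO v
  have h2 : ∀ i : ℤ, (N : ℤ) ≤ i → ρ.d i (c • v) = 0 := fun i hi => by
    rw [map_smul, h i hi, smul_zero]
  rw [ρ.E_eq_sum k (c • v) N h2, ρ.E_eq_sum k v N h, Finset.smul_sum]
  exact Finset.sum_congr rfl fun i _ => by rw [map_smul, smul_comm]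

/-- `E k` as a linear map (uses `hO`). -/
noncomputable def EL (hO : ρ.InO) (k : ℤ) : W →ₗ[ℂ] W where
  toFun := ρ.E k
  map_add' := ρ.E_add hO k
  map_smul' := ρ.E_smul hO k

@[simp] lemma EL_apply (k : ℤ) (v : W) : ρ.EL hO k v = ρ.E k v := rfl

end WittRep
section ScalarIdentities

open Finset

lemma exp_conv (m n : ℂ) (r : ℕ) :
    ∑ p ∈ Finset.HasAntidiagonal.antidiagonal r, m ^ p.1 * n ^ p.2 / ((p.1.factorial : ℂ) * (p.2.factorial : ℂ))
      = (m + n) ^ r / (r.factorial : ℂ) := by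
  rw [Finset.Nat.sum_antidiagonal_eq_sum_range_succ_mk, add_pow]
  rw [Finset.sum_div]
  apply Finset.sum_congr rfl
  intro k hk
  simp only [Finset.mem_range] at hk
  have hk' : k ≤ r := by omega
  have hfact : ((r.choose k : ℂ)) * (k.factorial : ℂ) * ((r - k).factorial : ℂ)
      = (r.factorial : ℂ) := by
    exact_mod_cast congrArg (Nat.cast (R := ℂ)) (Nat.choose_mul_factorial_mul_factorial hk')
  have h1 : (k.factorial : ℂ) ≠ 0 := Nat.cast_ne_zero.2 k.factorial_ne_zero
  have h2 : ((r - k).factorial : ℂ) ≠ 0 := Nat.cast_ne_zero.2 (r - k).factorial_ne_zero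
  have h3 : (r.factorial : ℂ) ≠ 0 := Nat.cast_ne_zero.2 r.factorial_ne_zero
  field_simp
  rw [← hfact]
  ring

lemma jsum_conv (m n : ℂ) (r : ℕ) :
    ∑ p ∈ Finset.HasAntidiagonal.antidiagonal (r + 1),
        (p.2 : ℂ) * (m ^ p.1 * n ^ p.2) / ((p.1.factorial : ℂ) * (p.2.factorial : ℂ))
      = n * ((m + n) ^ r / (r.factorial : ℂ)) := by
  rw [Finset.Nat.sum_antidiagonal_succ']
  simp only [Nat.cast_zero, pow_zero, mul_one, zero_mul, zero_div, add_zero, zero_add]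
  rw [← exp_conv m n r, Finset.mul_sum]
  apply Finset.sum_congr rfl
  intro p hp
  have h1 : (p.1.factorial : ℂ) ≠ 0 := Nat.cast_ne_zero.2 p.1.factorial_ne_zero
  have h2 : (p.2.factorial : ℂ) ≠ 0 := Nat.cast_ne_zero.2 p.2.factorial_ne_zero
  have hsucc : ((p.2 + 1).factorial : ℂ) = ((p.2 : ℂ) + 1) * (p.2.factorial : ℂ) := by
    rw [Nat.factorial_succ]; push_cast; ring
  rw [hsucc]
  have h3 : ((p.2 : ℂ) + 1) ≠ 0 := Nat.cast_add_one_ne_zero p.2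
  push_cast
  field_simp
  ring

end ScalarIdentities

section ScalarIdentities2
open Finset

lemma isum_conv (m n : ℂ) (r : ℕ) :
    ∑ p ∈ Finset.HasAntidiagonal.antidiagonal (r + 1),
        (p.1 : ℂ) * (m ^ p.1 * n ^ p.2) / ((p.1.factorial : ℂ) * (p.2.factorial : ℂ))
      = m * ((m + n) ^ r / (r.factorial : ℂ)) := by
  have := jsum_conv n m r
  rw [← Finset.Nat.sum_antidiagonal_swap] at this
  calc ∑ p ∈ Finset.HasAntidiagonal.antidiagonal (r + 1),
        (p.1 : ℂ) * (m ^ p.1 * n ^ p.2) / ((p.1.factorial : ℂ) * (p.2.factorial : ℂ))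
      = ∑ p ∈ Finset.HasAntidiagonal.antidiagonal (r + 1),
        ((p.swap.2 : ℂ) * (n ^ p.swap.1 * m ^ p.swap.2) /
          ((p.swap.1.factorial : ℂ) * (p.swap.2.factorial : ℂ))) := by
        apply Finset.sum_congr rfl; intro p _; simp [Prod.swap]; ring
    _ = m * ((n + m) ^ r / (r.factorial : ℂ)) := this
    _ = m * ((m + n) ^ r / (r.factorial : ℂ)) := by rw [add_comm n m]

lemma antidiag_scalar (m n : ℂ) (r : ℕ) :
    ∑ p ∈ Finset.HasAntidiagonal.antidiagonal (r + 1),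
        ((p.2 : ℂ) - (p.1 : ℂ)) * (m ^ p.1 * n ^ p.2) / ((p.1.factorial : ℂ) * (p.2.factorial : ℂ))
      = (n - m) * ((m + n) ^ r / (r.factorial : ℂ)) := by
  have : ∀ p : ℕ × ℕ,
      ((p.2 : ℂ) - (p.1 : ℂ)) * (m ^ p.1 * n ^ p.2) / ((p.1.factorial : ℂ) * (p.2.factorial : ℂ))
        = (p.2 : ℂ) * (m ^ p.1 * n ^ p.2) / ((p.1.factorial : ℂ) * (p.2.factorial : ℂ))
          - (p.1 : ℂ) * (m ^ p.1 * n ^ p.2) / ((p.1.factorial : ℂ) * (p.2.factorial : ℂ)) := by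
    intro p; ring
  simp only [this]
  rw [Finset.sum_sub_distrib, jsum_conv, isum_conv]
  ring

end ScalarIdentities2
namespace WittRep

variable {W : Type*} [AddCommGroup W] [Module ℂ W] (ρ : WittRep W)

lemma E_comm_D (hO : ρ.InO) (k : ℤ) (v : W) :
    ρ.E k (ρ.d (-1) v) - ρ.d (-1) (ρ.E k v) = (-(k : ℂ)) • ρ.E k v := by
  obtain ⟨N₁, h₁⟩ := hO v
  obtain ⟨N₂, h₂⟩ := hO (ρ.d (-1) v)
  set N := N₁ ⊔ N₂ with hNdef
  have hv : ∀ i : ℤ, (N : ℤ) ≤ i → ρ.d i v = 0 := fun i hi =>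
    h₁ i (by push_cast at hi ⊢; omega)
  have hDv : ∀ i : ℤ, ((N + 1 : ℕ) : ℤ) ≤ i → ρ.d i (ρ.d (-1) v) = 0 := fun i hi =>
    h₂ i (by push_cast at hi ⊢; omega)
  have hv' : ∀ i : ℤ, ((N + 1 : ℕ) : ℤ) ≤ i → ρ.d i v = 0 := fun i hi =>
    hv i (by push_cast at hi ⊢; omega)
  rw [ρ.E_eq_sum k (ρ.d (-1) v) (N + 1) hDv, ρ.E_eq_sum k v (N + 1) hv', map_sum]
  have step1 : ∀ i ∈ Finset.range (N + 2),
      (((k : ℂ) ^ i) / (Nat.factorial i : ℂ)) • ρ.d ((i : ℤ) - 1) (ρ.d (-1) v)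
        - ρ.d (-1) ((((k : ℂ) ^ i) / (Nat.factorial i : ℂ)) • ρ.d ((i : ℤ) - 1) v)
      = (((k : ℂ) ^ i) / (Nat.factorial i : ℂ)) • ((-(i : ℂ)) • ρ.d ((i : ℤ) - 2) v) := by
    intro i _
    rw [map_smul, ← smul_sub]
    congr 1
    have := ρ.comm_apply ((i : ℤ) - 1) (-1) (by omega) (by omega) v
    have e1 : ((-1 : ℤ) - ((i : ℤ) - 1)) = -(i : ℤ) := by ring
    have e2 : ((i : ℤ) - 1) + (-1) = (i : ℤ) - 2 := by ring
    rw [e1, e2] at this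
    rw [this]
    push_cast
    ring_nf
  rw [← Finset.sum_sub_distrib, Finset.sum_congr rfl step1, Finset.sum_range_succ']
  have h0 : (((k : ℂ) ^ 0) / (Nat.factorial 0 : ℂ)) • ((-((0 : ℕ) : ℂ)) • ρ.d (((0 : ℕ) : ℤ) - 2) v)
      = 0 := by simp
  rw [h0, add_zero]
  have htop : (-(k : ℂ)) • ((((k : ℂ) ^ (N + 1)) / (Nat.factorial (N + 1) : ℂ)) •
      ρ.d (((N + 1 : ℕ) : ℤ) - 1) v) = 0 := by
    have : ρ.d (((N + 1 : ℕ) : ℤ) - 1) v = 0 := hv _ (by push_cast; omega)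
    rw [this, smul_zero, smul_zero]
  conv_rhs => rw [Finset.smul_sum, Finset.sum_range_succ]
  rw [htop, add_zero]
  apply Finset.sum_congr rfl
  intro i _
  have e3 : (((i + 1 : ℕ) : ℤ) - 2) = (i : ℤ) - 1 := by push_cast; ring
  rw [e3, smul_smul, smul_smul]
  congr 1
  have h1 : ((i.factorial : ℂ)) ≠ 0 := Nat.cast_ne_zero.2 i.factorial_ne_zero
  have hsucc : (((i + 1).factorial : ℂ)) = ((i : ℂ) + 1) * (i.factorial : ℂ) := by
    rw [Nat.factorial_succ]; push_cast; ring
  have h2 : (((i + 1).factorial : ℂ)) ≠ 0 := Nat.cast_ne_zero.2 (i + 1).factorial_ne_zero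
  rw [hsucc] at *
  have h3 : ((i : ℂ) + 1) ≠ 0 := Nat.cast_add_one_ne_zero i
  push_cast
  field_simp
  ring

end WittRep
namespace WittRep

open Finset

variable {W : Type*} [AddCommGroup W] [Module ℂ W] (ρ : WittRep W)

lemma E_comm_E (hO : ρ.InO) (m n : ℤ) (v : W) :
    ρ.E m (ρ.E n v) - ρ.E n (ρ.E m v) = ((n - m : ℤ) : ℂ) • ρ.E (m + n) v := by
  classical
  obtain ⟨N₀, hN₀⟩ := hO v
  set B : ℕ → ℕ := fun j => Classical.choose (hO (ρ.d ((j : ℤ) - 1) v)) with hBdef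
  have hB : ∀ j : ℕ, ∀ i : ℤ, ((B j : ℕ) : ℤ) ≤ i → ρ.d i (ρ.d ((j : ℤ) - 1) v) = 0 :=
    fun j => Classical.choose_spec (hO (ρ.d ((j : ℤ) - 1) v))
  set K : ℕ := N₀ + 2 + (Finset.range (N₀ + 1)).sup B with hKdef
  have hKN : N₀ + 2 ≤ K := by omega
  have hKv : ∀ i : ℤ, (K : ℤ) ≤ i → ρ.d i v = 0 := fun i hi =>
    hN₀ i (by push_cast at hi ⊢; omega)
  have hKj : ∀ j : ℕ, j ≤ N₀ → ∀ i : ℤ, (K : ℤ) ≤ i → ρ.d i (ρ.d ((j : ℤ) - 1) v) = 0 := by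
    intro j hj i hi
    have hle : B j ≤ K := by
      have : B j ≤ (Finset.range (N₀ + 1)).sup B :=
        Finset.le_sup (Finset.mem_range.2 (by omega))
      omega
    have : ((B j : ℕ) : ℤ) ≤ (K : ℤ) := by exact_mod_cast hle
    exact hB j i (le_trans this hi)
  -- expansion lemma
  have hexp : ∀ m' n' : ℤ, ρ.E m' (ρ.E n' v) =
      ∑ j ∈ Finset.range (K + 1), ∑ i ∈ Finset.range (K + 1),
        ((((m' : ℂ) ^ i) / (Nat.factorial i : ℂ)) * (((n' : ℂ) ^ j) / (Nat.factorial j : ℂ))) •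
          ρ.d ((i : ℤ) - 1) (ρ.d ((j : ℤ) - 1) v) := by
    intro m' n'
    rw [ρ.E_eq_sum n' v N₀ hN₀]
    rw [show ρ.E m' = ρ.EL hO m' from rfl, map_sum]
    have h1 : ∀ j ∈ Finset.range (N₀ + 1),
        ρ.EL hO m' ((((n' : ℂ) ^ j) / (Nat.factorial j : ℂ)) • ρ.d ((j : ℤ) - 1) v)
          = ∑ i ∈ Finset.range (K + 1),
            ((((m' : ℂ) ^ i) / (Nat.factorial i : ℂ)) * (((n' : ℂ) ^ j) / (Nat.factorial j : ℂ))) •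
              ρ.d ((i : ℤ) - 1) (ρ.d ((j : ℤ) - 1) v) := by
      intro j hj
      rw [map_smul, EL_apply, ρ.E_eq_sum m' _ K (hKj j (by simpa using Nat.lt_succ_iff.1 (Finset.mem_range.1 hj))),
        Finset.smul_sum]
      apply Finset.sum_congr rfl
      intro i _
      rw [smul_smul, mul_comm]
    rw [Finset.sum_congr rfl h1]
    apply Finset.sum_subset
    · intro j hj
      exact Finset.mem_range.2 (by have := Finset.mem_range.1 hj; omega)
    · intro j hj hj'
      have hjz : ρ.d ((j : ℤ) - 1) v = 0 := by
        apply hN₀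
        have h5 := Finset.mem_range.1 hj
        have h6 : ¬ (j < N₀ + 1) := fun h => hj' (Finset.mem_range.2 h)
        push_cast
        omega
      apply Finset.sum_eq_zero
      intro i _
      rw [hjz, map_zero, smul_zero]
  have hexp2 : ρ.E n (ρ.E m v) =
      ∑ j ∈ Finset.range (K + 1), ∑ i ∈ Finset.range (K + 1),
        ((((n : ℂ) ^ j) / (Nat.factorial j : ℂ)) * (((m : ℂ) ^ i) / (Nat.factorial i : ℂ))) •
          ρ.d ((j : ℤ) - 1) (ρ.d ((i : ℤ) - 1) v) := by
    rw [hexp n m]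
    exact Finset.sum_comm
  rw [hexp m n, hexp2]
  rw [← Finset.sum_sub_distrib]
  have hstep : ∀ j ∈ Finset.range (K + 1),
      ((∑ i ∈ Finset.range (K + 1),
        ((((m : ℂ) ^ i) / (Nat.factorial i : ℂ)) * (((n : ℂ) ^ j) / (Nat.factorial j : ℂ))) •
          ρ.d ((i : ℤ) - 1) (ρ.d ((j : ℤ) - 1) v))
        - ∑ i ∈ Finset.range (K + 1),
        ((((n : ℂ) ^ j) / (Nat.factorial j : ℂ)) * (((m : ℂ) ^ i) / (Nat.factorial i : ℂ))) •
          ρ.d ((j : ℤ) - 1) (ρ.d ((i : ℤ) - 1) v))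
      = ∑ i ∈ Finset.range (K + 1),
          ((((j : ℕ) : ℂ) - ((i : ℕ) : ℂ)) * ((m : ℂ) ^ i * (n : ℂ) ^ j) /
            ((Nat.factorial i : ℂ) * (Nat.factorial j : ℂ))) •
            ρ.d (((i : ℕ) : ℤ) + ((j : ℕ) : ℤ) - 2) v := by
    intro j _
    rw [← Finset.sum_sub_distrib]
    apply Finset.sum_congr rfl
    intro i _
    rw [mul_comm (((n : ℂ) ^ j) / (Nat.factorial j : ℂ)), ← smul_sub]
    have hc := ρ.comm_apply ((i : ℤ) - 1) ((j : ℤ) - 1) (by omega) (by omega) v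
    have e1 : (((j : ℤ) - 1) - ((i : ℤ) - 1)) = (j : ℤ) - (i : ℤ) := by ring
    have e2 : ((i : ℤ) - 1) + ((j : ℤ) - 1) = (i : ℤ) + (j : ℤ) - 2 := by ring
    rw [e1, e2] at hc
    rw [hc, smul_smul]
    congr 1
    push_cast
    ring
  rw [Finset.sum_congr rfl hstep]
  -- now a double sum over the product
  rw [Finset.sum_comm]
  rw [← Finset.sum_product']
  have hsum1 : ∑ p ∈ Finset.range (K + 1) ×ˢ Finset.range (K + 1),
      ((((p.2 : ℕ) : ℂ) - ((p.1 : ℕ) : ℂ)) * ((m : ℂ) ^ p.1 * (n : ℂ) ^ p.2) /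
        ((Nat.factorial p.1 : ℂ) * (Nat.factorial p.2 : ℂ))) •
        ρ.d (((p.1 : ℕ) : ℤ) + ((p.2 : ℕ) : ℤ) - 2) v
      = ∑ p ∈ (Finset.range (2 * K + 2)).biUnion (fun s => Finset.HasAntidiagonal.antidiagonal s),
      ((((p.2 : ℕ) : ℂ) - ((p.1 : ℕ) : ℂ)) * ((m : ℂ) ^ p.1 * (n : ℂ) ^ p.2) /
        ((Nat.factorial p.1 : ℂ) * (Nat.factorial p.2 : ℂ))) •
        ρ.d (((p.1 : ℕ) : ℤ) + ((p.2 : ℕ) : ℤ) - 2) v := by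
    apply Finset.sum_subset
    · intro p hp
      rw [Finset.mem_product] at hp
      rw [Finset.mem_biUnion]
      exact ⟨p.1 + p.2, Finset.mem_range.2 (by
        have := Finset.mem_range.1 hp.1; have := Finset.mem_range.1 hp.2; omega),
        Finset.HasAntidiagonal.mem_antidiagonal.2 rfl⟩
    · intro p hp hp'
      have : ρ.d (((p.1 : ℕ) : ℤ) + ((p.2 : ℕ) : ℤ) - 2) v = 0 := by
        apply hN₀
        rw [Finset.mem_product, not_and_or] at hp'
        have h1 : K + 1 ≤ p.1 ∨ K + 1 ≤ p.2 := by
          rcases hp' with h | h <;> [left; right] <;>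
            simpa using Nat.not_lt.1 (fun hlt => h (Finset.mem_range.2 hlt))
        push_cast
        omega
      rw [this, smul_zero]
  rw [hsum1]
  rw [Finset.sum_biUnion (by
    intro s hs t ht hst
    simp only [Function.onFun]
    rw [Finset.disjoint_left]
    intro p hps hpt
    exact hst ((Finset.HasAntidiagonal.mem_antidiagonal.1 hps).symm.trans (Finset.HasAntidiagonal.mem_antidiagonal.1 hpt)))]
  -- compute inner sums
  have hinner : ∀ s ∈ Finset.range (2 * K + 2), (∑ p ∈ Finset.HasAntidiagonal.antidiagonal s,
      ((((p.2 : ℕ) : ℂ) - ((p.1 : ℕ) : ℂ)) * ((m : ℂ) ^ p.1 * (n : ℂ) ^ p.2) /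
        ((Nat.factorial p.1 : ℂ) * (Nat.factorial p.2 : ℂ))) •
        ρ.d (((p.1 : ℕ) : ℤ) + ((p.2 : ℕ) : ℤ) - 2) v)
      = (if s = 0 then (0 : ℂ) else
          (((n : ℂ) - (m : ℂ)) * (((m : ℂ) + (n : ℂ)) ^ (s - 1) / (Nat.factorial (s - 1) : ℂ))))
        • ρ.d ((s : ℤ) - 2) v := by
    intro s _
    have hFs : ∀ p ∈ Finset.HasAntidiagonal.antidiagonal s,
        (((((p.2 : ℕ) : ℂ) - ((p.1 : ℕ) : ℂ)) * ((m : ℂ) ^ p.1 * (n : ℂ) ^ p.2) /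
          ((Nat.factorial p.1 : ℂ) * (Nat.factorial p.2 : ℂ))) •
          ρ.d (((p.1 : ℕ) : ℤ) + ((p.2 : ℕ) : ℤ) - 2) v)
        = ((((p.2 : ℕ) : ℂ) - ((p.1 : ℕ) : ℂ)) * ((m : ℂ) ^ p.1 * (n : ℂ) ^ p.2) /
            ((Nat.factorial p.1 : ℂ) * (Nat.factorial p.2 : ℂ))) • ρ.d ((s : ℤ) - 2) v := by
      intro p hp
      have hps := Finset.HasAntidiagonal.mem_antidiagonal.1 hp
      congr 2
      push_cast [← hps]
      ring
    rw [Finset.sum_congr rfl hFs, ← Finset.sum_smul]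
    congr 1
    cases s with
    | zero => simp [Finset.Nat.antidiagonal_zero]
    | succ r =>
      rw [antidiag_scalar m n r]
      simp
  rw [Finset.sum_congr rfl hinner]
  -- strip the s = 0 term and compare with RHS
  rw [Finset.sum_range_succ']
  have hrhs : ((n - m : ℤ) : ℂ) • ρ.E (m + n) v
      = ∑ s ∈ Finset.range (2 * K + 1),
          (((n : ℂ) - (m : ℂ)) * ((((m : ℂ) + (n : ℂ)) ^ s) / (Nat.factorial s : ℂ))) •
            ρ.d ((s : ℤ) - 1) v := by
    rw [ρ.E_eq_sum (m + n) v (2 * K) (fun i hi => hKv i (by push_cast at hi ⊢; omega)),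
      Finset.smul_sum]
    apply Finset.sum_congr rfl
    intro s _
    rw [smul_smul]
    congr 1
    push_cast
    ring
  rw [hrhs]
  have hz : (if (0 : ℕ) = 0 then (0 : ℂ) else
      (((n : ℂ) - (m : ℂ)) * (((m : ℂ) + (n : ℂ)) ^ (0 - 1) / (Nat.factorial (0 - 1) : ℂ)))) •
      ρ.d (((0 : ℕ) : ℤ) - 2) v = 0 := by simp
  rw [hz, add_zero]
  apply Finset.sum_congr rfl
  intro s _
  have e3 : (((s + 1 : ℕ) : ℤ) - 2) = (s : ℤ) - 1 := by push_cast; ring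
  rw [if_neg (Nat.succ_ne_zero s), e3, Nat.add_sub_cancel]

end WittRep
namespace WittRep

open Finset

variable {W : Type*} [AddCommGroup W] [Module ℂ W] (ρ : WittRep W)

lemma E_eq_EL (hO : ρ.InO) (k : ℤ) : ρ.E k = ⇑(ρ.EL hO k) := rfl

/-- The operator `A_k = λ^k E_k - d_{-1}` together with the scalar part, as a linear map. -/
noncomputable def Phi (hO : ρ.InO) (lam a b : ℂ) (k j : ℤ) : W →ₗ[ℂ] W :=
  lam ^ k • ρ.EL hO k - ρ.d (-1) + (a + (k : ℂ) * b + (j : ℂ)) • LinearMap.id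

lemma Phi_apply (hO : ρ.InO) (lam a b : ℂ) (k j : ℤ) (v : W) :
    ρ.Phi hO lam a b k j v
      = lam ^ k • ρ.E k v - ρ.d (-1) v + (a + (k : ℂ) * b + (j : ℂ)) • v := rfl

/-- `Lact` as a linear map. -/
noncomputable def LactL (hO : ρ.InO) (lam a b : ℂ) (k : ℤ) : (ℤ →₀ W) →ₗ[ℂ] (ℤ →₀ W) :=
  Finsupp.lsum ℂ fun j => (Finsupp.lsingle (k + j)).comp (ρ.Phi hO lam a b k j)

lemma Lact_eq_LactL (hO : ρ.InO) (lam a b : ℂ) (k : ℤ) :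
    ρ.Lact lam a b k = ⇑(ρ.LactL hO lam a b k) := by
  funext f
  rw [WittRep.Lact, LactL, Finsupp.lsum_apply]
  apply Finsupp.sum_congr
  intro j _
  rfl

lemma LactL_single (hO : ρ.InO) (lam a b : ℂ) (k j : ℤ) (v : W) :
    ρ.LactL hO lam a b k (Finsupp.single j v)
      = Finsupp.single (k + j) (ρ.Phi hO lam a b k j v) := by
  rw [LactL, Finsupp.lsum_single]
  rfl

lemma lact_single (hO : ρ.InO) (lam a b : ℂ) (k j : ℤ) (v : W) :
    ρ.Lact lam a b k (Finsupp.single j v)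
      = Finsupp.single (k + j)
          (lam ^ k • ρ.E k v - ρ.d (-1) v + (a + (k : ℂ) * b + (j : ℂ)) • v) := by
  rw [Lact_eq_LactL ρ hO, LactL_single, Phi_apply]

lemma star_identity (hO : ρ.InO) (lam : ℂ) (hlam : lam ≠ 0) (m n : ℤ) (v : W) :
    (lam ^ m • ρ.E m (lam ^ n • ρ.E n v - ρ.d (-1) v)
        - ρ.d (-1) (lam ^ n • ρ.E n v - ρ.d (-1) v))
      - (lam ^ n • ρ.E n (lam ^ m • ρ.E m v - ρ.d (-1) v)
        - ρ.d (-1) (lam ^ m • ρ.E m v - ρ.d (-1) v))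
    = ((n : ℂ) - (m : ℂ)) • (lam ^ (m + n) • ρ.E (m + n) v - ρ.d (-1) v)
      + (m : ℂ) • (lam ^ m • ρ.E m v - ρ.d (-1) v)
      - (n : ℂ) • (lam ^ n • ρ.E n v - ρ.d (-1) v) := by
  have hEm : ρ.E m (lam ^ n • ρ.E n v - ρ.d (-1) v)
      = lam ^ n • ρ.E m (ρ.E n v) - ρ.E m (ρ.d (-1) v) := by
    rw [E_eq_EL ρ hO m, map_sub, map_smul]
  have hEn : ρ.E n (lam ^ m • ρ.E m v - ρ.d (-1) v)
      = lam ^ m • ρ.E n (ρ.E m v) - ρ.E n (ρ.d (-1) v) := by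
    rw [E_eq_EL ρ hO n, map_sub, map_smul]
  have hce : ρ.E m (ρ.E n v) = (((n : ℂ) - (m : ℂ)) • ρ.E (m + n) v) + ρ.E n (ρ.E m v) := by
    have := ρ.E_comm_E hO m n v
    push_cast at this
    exact sub_eq_iff_eq_add.1 this
  have hcd1 : ρ.E m (ρ.d (-1) v) = ((-(m : ℂ)) • ρ.E m v) + ρ.d (-1) (ρ.E m v) :=
    sub_eq_iff_eq_add.1 (ρ.E_comm_D hO m v)
  have hcd2 : ρ.E n (ρ.d (-1) v) = ((-(n : ℂ)) • ρ.E n v) + ρ.d (-1) (ρ.E n v) :=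
    sub_eq_iff_eq_add.1 (ρ.E_comm_D hO n v)
  rw [hEm, hEn, hce, hcd1, hcd2, zpow_add₀ hlam, map_sub, map_sub, map_smul, map_smul]
  module

lemma lact_comm (hO : ρ.InO) (lam a b : ℂ) (hlam : lam ≠ 0) (m n : ℤ) (f : ℤ →₀ W) :
    ρ.Lact lam a b m (ρ.Lact lam a b n f) - ρ.Lact lam a b n (ρ.Lact lam a b m f)
      = ((n : ℂ) - (m : ℂ)) • ρ.Lact lam a b (m + n) f := by
  simp only [Lact_eq_LactL ρ hO]
  have key : (ρ.LactL hO lam a b m) ∘ₗ (ρ.LactL hO lam a b n)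
      - (ρ.LactL hO lam a b n) ∘ₗ (ρ.LactL hO lam a b m)
      = ((n : ℂ) - (m : ℂ)) • ρ.LactL hO lam a b (m + n) := by
    apply Finsupp.lhom_ext
    intro j v
    simp only [LinearMap.sub_apply, LinearMap.coe_comp, Function.comp_apply,
      LinearMap.smul_apply, LactL_single]
    rw [show m + (n + j) = (m + n) + j by ring, show n + (m + j) = (m + n) + j by ring]
    rw [← Finsupp.single_sub, Finsupp.smul_single]
    congr 1
    simp only [Phi_apply]
    have hstar := ρ.star_identity hO lam hlam m n v
    have expand1 : ρ.E m (lam ^ n • ρ.E n v - ρ.d (-1) v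
          + (a + (n : ℂ) * b + (j : ℂ)) • v)
        = ρ.E m (lam ^ n • ρ.E n v - ρ.d (-1) v) + (a + (n : ℂ) * b + (j : ℂ)) • ρ.E m v := by
      rw [E_eq_EL ρ hO m, map_add, map_smul]
    have expand2 : ρ.E n (lam ^ m • ρ.E m v - ρ.d (-1) v
          + (a + (m : ℂ) * b + (j : ℂ)) • v)
        = ρ.E n (lam ^ m • ρ.E m v - ρ.d (-1) v) + (a + (m : ℂ) * b + (j : ℂ)) • ρ.E n v := by
      rw [E_eq_EL ρ hO n, map_add, map_smul]
    rw [expand1, expand2]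
    rw [map_add, map_add, map_smul, map_smul]
    push_cast
    linear_combination (norm := module) hstar
  have := congrArg (fun L : (ℤ →₀ W) →ₗ[ℂ] (ℤ →₀ W) => L f) key
  simpa using this
end WittRep
namespace WittRep

open Finset Submodule

variable {W : Type*} [AddCommGroup W] [Module ℂ W]

/-- The vectors `w_n = d_{-1}^n w₀`. -/
noncomputable def wv (ρ : WittRep W) (w₀ : W) : ℕ → W
  | 0 => w₀
  | n + 1 => ρ.d (-1) (wv ρ w₀ n)

/-- coefficient of `d_1` on `w_n`. -/
noncomputable def cc (b' : ℂ) (n : ℕ) : ℂ := -(n : ℂ) * (2 * b' - n + 1)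

/-- coefficient of `d_2` on `w_n`. -/
noncomputable def ee (b' : ℂ) (n : ℕ) : ℂ := (n : ℂ) * ((n : ℂ) - 1) * (3 * b' - n + 2)

variable (ρ : WittRep W) (b' : ℂ) (w₀ : W)

lemma wv_succ (n : ℕ) : ρ.wv w₀ (n + 1) = ρ.d (-1) (ρ.wv w₀ n) := rfl

variable (hhw : ρ.IsHW w₀ b')
include hhw

lemma d0_wv (n : ℕ) : ρ.d 0 (ρ.wv w₀ n) = (b' - n) • ρ.wv w₀ n := by
  induction n with
  | zero =>
    show ρ.d 0 w₀ = (b' - ((0 : ℕ) : ℂ)) • w₀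
    rw [Nat.cast_zero, sub_zero]; exact hhw.2.1
  | succ k ih =>
    have hc := sub_eq_iff_eq_add'.1 (ρ.comm_apply 0 (-1) (by omega) (by omega) (ρ.wv w₀ k))
    have e1 : (0 : ℤ) + -1 = -1 := by norm_num
    rw [e1] at hc
    rw [wv_succ, hc, ih, map_smul, ← wv_succ]
    push_cast
    module

lemma d1_wv : ∀ n : ℕ, ρ.d 1 (ρ.wv w₀ (n + 1)) = cc b' (n + 1) • ρ.wv w₀ n := by
  have key : ∀ x : W, ρ.d 1 (ρ.d (-1) x) = ρ.d (-1) (ρ.d 1 x) + (-2 : ℂ) • ρ.d 0 x := by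
    intro x
    have hc := sub_eq_iff_eq_add'.1 (ρ.comm_apply 1 (-1) (by omega) (by omega) x)
    rw [hc]
    norm_num
  intro n
  induction n with
  | zero =>
    rw [wv_succ, key, show ρ.wv w₀ 0 = w₀ from rfl, hhw.2.2 1 le_rfl, map_zero, zero_add,
      hhw.2.1, smul_smul]
    congr 1
    rw [cc]
    push_cast
    ring
  | succ k ih =>
    rw [wv_succ, key, ih, map_smul, ← wv_succ, d0_wv ρ b' w₀ hhw (k + 1), smul_smul,
      ← add_smul]
    congr 1
    rw [cc, cc]
    push_cast
    ring

lemma d2_wv0 : ρ.d 2 (ρ.wv w₀ 0) = 0 := hhw.2.2 2 (by omega)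

lemma d2_wv1 : ρ.d 2 (ρ.wv w₀ 1) = 0 := by
  have hc := sub_eq_iff_eq_add'.1 (ρ.comm_apply 2 (-1) (by omega) (by omega) (ρ.wv w₀ 0))
  have e1 : (2 : ℤ) + -1 = 1 := by norm_num
  rw [e1] at hc
  rw [wv_succ, hc, show ρ.wv w₀ 0 = w₀ from rfl, hhw.2.2 2 (by omega), hhw.2.2 1 (by omega),
    map_zero]
  simp

lemma d2_wv : ∀ n : ℕ, ρ.d 2 (ρ.wv w₀ (n + 2)) = ee b' (n + 2) • ρ.wv w₀ n := by
  have key : ∀ x : W, ρ.d 2 (ρ.d (-1) x) = ρ.d (-1) (ρ.d 2 x) + (-3 : ℂ) • ρ.d 1 x := by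
    intro x
    have hc := sub_eq_iff_eq_add'.1 (ρ.comm_apply 2 (-1) (by omega) (by omega) x)
    rw [hc]
    norm_num
  intro n
  induction n with
  | zero =>
    rw [wv_succ, key, d2_wv1 ρ b' w₀ hhw, map_zero, zero_add,
      d1_wv ρ b' w₀ hhw 0, smul_smul]
    congr 1
    rw [cc, ee]
    push_cast
    ring
  | succ k ih =>
    rw [wv_succ, key, ih, map_smul, ← wv_succ, d1_wv ρ b' w₀ hhw (k + 1), smul_smul, ← add_smul]
    congr 1
    rw [cc, ee, ee]
    push_cast
    ring

omit hhw in
lemma d_neg_one_mem_span (v : W) (hv : v ∈ span ℂ (Set.range (ρ.wv w₀))) :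
    ρ.d (-1) v ∈ span ℂ (Set.range (ρ.wv w₀)) := by
  induction hv using Submodule.span_induction with
  | mem x hx =>
    obtain ⟨n, rfl⟩ := hx
    exact subset_span ⟨n + 1, rfl⟩
  | zero => simp
  | add x y _ _ hx hy => rw [map_add]; exact add_mem hx hy
  | smul c x _ hx => rw [map_smul]; exact smul_mem _ c hx

lemma d_wv_mem_span (n : ℕ) : ∀ i : ℤ, -1 ≤ i →
    ρ.d i (ρ.wv w₀ n) ∈ span ℂ (Set.range (ρ.wv w₀)) := by
  induction n with
  | zero =>
    intro i hi
    rcases lt_trichotomy i 0 with h | h | h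
    · have : i = -1 := by omega
      subst this
      exact subset_span ⟨1, rfl⟩
    · subst h
      rw [show ρ.wv w₀ 0 = w₀ from rfl, hhw.2.1]
      exact smul_mem _ _ (subset_span ⟨0, rfl⟩)
    · rw [show ρ.wv w₀ 0 = w₀ from rfl, hhw.2.2 i (by omega)]
      simp
  | succ k ih =>
    intro i hi
    rcases eq_or_lt_of_le hi with h | h
    · rw [← h]
      exact subset_span ⟨k + 2, rfl⟩
    · have hc := sub_eq_iff_eq_add'.1 (ρ.comm_apply i (-1) (by omega) (by omega) (ρ.wv w₀ k))
      rw [wv_succ, hc]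
      exact add_mem (ρ.d_neg_one_mem_span w₀ _ (ih i hi)) (smul_mem _ _ (ih (i + -1) (by omega)))

lemma span_wv_eq_top (hgen : ρ.Generates w₀) : span ℂ (Set.range (ρ.wv w₀)) = ⊤ := by
  apply hgen
  · intro i hi u hu
    induction hu using Submodule.span_induction with
    | mem x hx =>
      obtain ⟨n, rfl⟩ := hx
      exact ρ.d_wv_mem_span b' w₀ hhw n i hi
    | zero => simp
    | add x y _ _ hx hy => rw [map_add]; exact add_mem hx hy
    | smul c x _ hx => rw [map_smul]; exact smul_mem _ c hx
  · exact subset_span ⟨0, rfl⟩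

end WittRep
namespace WittRep

open Finset Submodule

variable {W : Type*} [AddCommGroup W] [Module ℂ W]

/-- linear independence from a range criterion. -/
lemma li_of_ranges (v : ℕ → W)
    (h : ∀ N : ℕ, ∀ β : ℕ → ℂ, (∑ i ∈ Finset.range (N + 1), β i • v i = 0) →
      ∀ i ≤ N, β i = 0) : LinearIndependent ℂ v := by
  rw [linearIndependent_iff']
  intro s g hg i hi
  classical
  set N := s.sup id with hN
  have hsub : s ⊆ Finset.range (N + 1) := fun j hj =>
    Finset.mem_range.2 (Nat.lt_succ_of_le (Finset.le_sup (f := id) hj))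
  set g' : ℕ → ℂ := fun j => if j ∈ s then g j else 0 with hg'
  have hsum : ∑ j ∈ Finset.range (N + 1), g' j • v j = 0 := by
    rw [← Finset.sum_subset hsub (fun x _ hx => by simp [hg', if_neg hx])]
    rw [← hg]
    apply Finset.sum_congr rfl
    intro j hj
    simp [hg', if_pos hj]
  have := h N g' hsum i (Nat.le_of_lt_succ (Finset.mem_range.1 (hsub hi)))
  simpa [hg', if_pos hi] using this

variable (ρ : WittRep W) (b' : ℂ) (w₀ : W)

lemma cc_zero_cases (hb' : b' ≠ 0) (j : ℕ) (hj : 1 ≤ j) (hcc : cc b' j = 0) :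
    2 ≤ j ∧ ee b' j ≠ 0 := by
  have hjC : (j : ℂ) ≠ 0 := Nat.cast_ne_zero.2 (by omega)
  rw [cc, neg_mul, neg_eq_zero, mul_eq_zero] at hcc
  rcases hcc with h | h
  · exact absurd h hjC
  · have hb2 : 2 * b' = (j : ℂ) - 1 := by linear_combination h
    have hj2 : 2 ≤ j := by
      by_contra hlt
      have : j = 1 := by omega
      subst this
      apply hb'
      have h20 : 2 * b' = 0 := by rw [hb2]; norm_num
      linear_combination h20 / 2
    refine ⟨hj2, ?_⟩
    rw [ee]
    have h3 : 3 * b' - (j : ℂ) + 2 = ((j : ℂ) + 1) / 2 := by linear_combination (3/2 : ℂ) * hb2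
    rw [h3]
    have h4 : (j : ℂ) - 1 ≠ 0 := by
      intro hh
      have : (j : ℂ) = 1 := by linear_combination hh
      have : j = 1 := by exact_mod_cast this
      omega
    have h5 : (j : ℂ) + 1 ≠ 0 := Nat.cast_add_one_ne_zero j
    intro hh
    rcases mul_eq_zero.1 hh with hh1 | hh2
    · rcases mul_eq_zero.1 hh1 with hh3 | hh4
      · exact hjC hh3
      · exact h4 hh4
    · rw [div_eq_zero_iff] at hh2
      rcases hh2 with hh5 | hh6
      · exact h5 hh5
      · norm_num at hh6

variable (hb' : b' ≠ 0) (hhw : ρ.IsHW w₀ b')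
include hb' hhw

lemma wv_li : LinearIndependent ℂ (ρ.wv w₀) := by
  apply li_of_ranges
  intro N
  induction N using Nat.strong_induction_on with
  | _ N IH =>
    intro β hβ
    -- case N = 0
    match N, IH with
    | 0, _ =>
      intro i hi
      interval_cases i
      have h0 : β 0 • ρ.wv w₀ 0 = 0 := by simpa using hβ
      exact (smul_eq_zero.1 h0).resolve_right hhw.1
    | (M + 1), IH =>
      -- apply d 1
      have r1 : ∑ i ∈ Finset.range (M + 1), (β (i + 1) * cc b' (i + 1)) • ρ.wv w₀ i = 0 := by
        have h := congrArg (ρ.d 1) hβ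
        rw [map_sum, map_zero] at h
        rw [Finset.sum_range_succ'] at h
        simp only [map_smul] at h
        rw [show ρ.wv w₀ 0 = w₀ from rfl, hhw.2.2 1 le_rfl, smul_zero, add_zero] at h
        rw [← h]
        apply Finset.sum_congr rfl
        intro i _
        rw [d1_wv ρ b' w₀ hhw i, smul_smul]
      have h1 : ∀ i ≤ M, β (i + 1) * cc b' (i + 1) = 0 :=
        IH M (Nat.lt_succ_self M) (fun t => β (t + 1) * cc b' (t + 1)) r1
      -- coefficients at indices ≥ 1 vanish
      have hvanish : ∀ j : ℕ, 1 ≤ j → j ≤ M + 1 → β j = 0 := by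
        intro j hj1 hj2
        have hccj := h1 (j - 1) (by omega)
        rw [show j - 1 + 1 = j by omega] at hccj
        rcases mul_eq_zero.1 hccj with h | hcc
        · exact h
        · obtain ⟨hj2', heej⟩ := cc_zero_cases b' hb' j hj1 hcc
          -- need the d2 relation; requires M ≥ 1
          have hM : 1 ≤ M := by omega
          obtain ⟨M', rfl⟩ : ∃ M', M = M' + 1 := ⟨M - 1, by omega⟩
          have r2 : ∑ i ∈ Finset.range (M' + 1),
              (β (i + 2) * ee b' (i + 2)) • ρ.wv w₀ i = 0 := by
            have h := congrArg (ρ.d 2) hβ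
            rw [map_sum, map_zero] at h
            rw [Finset.sum_range_succ', Finset.sum_range_succ'] at h
            simp only [map_smul] at h
            rw [ρ.d2_wv1 b' w₀ hhw, smul_zero, add_zero,
              show ρ.wv w₀ 0 = w₀ from rfl, hhw.2.2 2 (by omega), smul_zero, add_zero] at h
            rw [← h]
            apply Finset.sum_congr rfl
            intro i _
            rw [show i + 1 + 1 = i + 2 by omega, d2_wv ρ b' w₀ hhw i, smul_smul]
          have h2 : ∀ i ≤ M', β (i + 2) * ee b' (i + 2) = 0 :=
            fun i hi => IH M' (by omega) (fun t => β (t + 2) * ee b' (t + 2)) r2 i hi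
          have := h2 (j - 2) (by omega)
          rw [show j - 2 + 2 = j by omega] at this
          rcases mul_eq_zero.1 this with h | h
          · exact h
          · exact absurd h heej
      intro i hi
      rcases Nat.eq_zero_or_pos i with rfl | hipos
      · -- β 0 = 0
        have h0 : β 0 • ρ.wv w₀ 0 = 0 := by
          rw [Finset.sum_range_succ'] at hβ
          have : ∀ i ∈ Finset.range (M + 1), β (i + 1) • ρ.wv w₀ (i + 1) = 0 := by
            intro i hi
            rw [hvanish (i + 1) (by omega) (by have := Finset.mem_range.1 hi; omega), zero_smul]
          rw [Finset.sum_congr rfl this, Finset.sum_const_zero, zero_add] at hβ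
          exact hβ
        exact (smul_eq_zero.1 h0).resolve_right hhw.1
      · exact hvanish i hipos hi

end WittRep
namespace WittRep

open Finset Submodule

variable {W : Type*} [AddCommGroup W] [Module ℂ W]

/-- The operator `Q = -E_1 - d_{-1} + (a + b' + 1)`. -/
noncomputable def Qv (ρ : WittRep W) (a b' : ℂ) (v : W) : W :=
  (-1 : ℂ) • ρ.E 1 v - ρ.d (-1) v + (a + b' + 1) • v

/-- The vectors `X^{(m)}_i` (written `Yv i m`). -/
noncomputable def Yv (ρ : WittRep W) (a b' : ℂ) (w₀ : W) : ℕ → ℤ → W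
  | 0, _ => w₀
  | (i + 1), m => ρ.Qv a b' (Yv ρ a b' w₀ i (m - 1))
      + ((m - 1 : ℤ) : ℂ) • Yv ρ a b' w₀ i (m - 1)

variable (ρ : WittRep W) (a b' : ℂ) (w₀ : W)

lemma Qv_zero : ρ.Qv a b' (0 : W) = 0 := by simp [Qv, E_zero]

lemma Qv_add (hO : ρ.InO) (u v : W) : ρ.Qv a b' (u + v) = ρ.Qv a b' u + ρ.Qv a b' v := by
  simp only [Qv, ρ.E_add hO, map_add, smul_add]
  abel

lemma Qv_smul (hO : ρ.InO) (c : ℂ) (v : W) : ρ.Qv a b' (c • v) = c • ρ.Qv a b' v := by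
  simp only [Qv, ρ.E_smul hO, map_smul, smul_add, smul_sub, smul_comm c]

lemma lact_iterate (hO : ρ.InO) (i : ℕ) (p : ℤ) :
    (ρ.Lact (-1) a (b' + 1) 1)^[i] (Finsupp.single p w₀)
      = Finsupp.single (p + (i : ℕ)) (ρ.Yv a b' w₀ i (p + (i : ℕ))) := by
  induction i with
  | zero => simp [Yv]
  | succ k ih =>
    rw [Function.iterate_succ_apply', ih, ρ.lact_single hO]
    have hidx : (1 : ℤ) + (p + (k : ℕ)) = p + ((k + 1 : ℕ) : ℤ) := by push_cast; ring
    rw [hidx]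
    congr 1
    show _ = ρ.Yv a b' w₀ (k + 1) (p + ((k + 1 : ℕ) : ℤ))
    rw [Yv]
    have hm : p + ((k + 1 : ℕ) : ℤ) - 1 = p + (k : ℕ) := by push_cast; ring
    rw [hm, Qv]
    rw [zpow_one]
    push_cast
    module

section HW

variable (hhw : ρ.IsHW w₀ b')
include hhw

lemma dpos_mem (n : ℕ) : ∀ i : ℤ, 1 ≤ i →
    ρ.d i (ρ.wv w₀ n) ∈ span ℂ (ρ.wv w₀ '' Set.Iio n) := by
  induction n with
  | zero =>
    intro i hi
    rw [show ρ.wv w₀ 0 = w₀ from rfl, hhw.2.2 i hi]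
    simp
  | succ k ih =>
    intro i hi
    have D_mem : ∀ v ∈ span ℂ (ρ.wv w₀ '' Set.Iio k),
        ρ.d (-1) v ∈ span ℂ (ρ.wv w₀ '' Set.Iio (k + 1)) := by
      intro v hv
      induction hv using Submodule.span_induction with
      | mem x hx =>
        obtain ⟨t, ht, rfl⟩ := hx
        exact subset_span ⟨t + 1, by simp only [Set.mem_Iio] at ht ⊢; omega, rfl⟩
      | zero => simp
      | add x y _ _ hx hy => rw [map_add]; exact add_mem hx hy
      | smul c x _ hx => rw [map_smul]; exact smul_mem _ c hx
    have hc := sub_eq_iff_eq_add'.1 (ρ.comm_apply i (-1) (by omega) (by omega) (ρ.wv w₀ k))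
    rw [wv_succ, hc]
    refine add_mem (D_mem _ (ih i hi)) (smul_mem _ _ ?_)
    rcases eq_or_lt_of_le hi with h | h
    · rw [← h]
      norm_num
      rw [d0_wv ρ b' w₀ hhw k]
      exact smul_mem _ _ (subset_span ⟨k, Set.mem_Iio.2 (by omega), rfl⟩)
    · exact span_mono (Set.image_mono (fun t ht => by
        simp only [Set.mem_Iio] at ht ⊢; omega)) (ih (i + -1) (by omega))

lemma dnn_mem (n : ℕ) : ∀ i : ℤ, 0 ≤ i →
    ρ.d i (ρ.wv w₀ n) ∈ span ℂ (ρ.wv w₀ '' Set.Iic n) := by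
  intro i hi
  rcases eq_or_lt_of_le hi with h | h
  · have h' : i = 0 := h.symm
    subst h'
    rw [d0_wv ρ b' w₀ hhw n]
    exact smul_mem _ _ (subset_span ⟨n, Set.mem_Iic.2 le_rfl, rfl⟩)
  · exact span_mono (Set.image_mono Set.Iio_subset_Iic_self)
      (ρ.dpos_mem b' w₀ hhw n i (by omega))

lemma E1_wv (hO : ρ.InO) (n : ℕ) : ∃ r ∈ span ℂ (ρ.wv w₀ '' Set.Iic n),
    ρ.E 1 (ρ.wv w₀ n) = ρ.wv w₀ (n + 1) + r := by
  obtain ⟨N, hN⟩ := hO (ρ.wv w₀ n)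
  rw [ρ.E_eq_sum 1 (ρ.wv w₀ n) N hN, Finset.sum_range_succ']
  refine ⟨∑ i ∈ Finset.range N, ((((1 : ℤ) : ℂ) ^ (i + 1)) / (Nat.factorial (i + 1) : ℂ)) •
      ρ.d (((i + 1 : ℕ) : ℤ) - 1) (ρ.wv w₀ n), ?_, ?_⟩
  · apply sum_mem
    intro i _
    apply smul_mem
    have hidx : ((i + 1 : ℕ) : ℤ) - 1 = (i : ℕ) := by push_cast; ring
    rw [hidx]
    exact ρ.dnn_mem b' w₀ hhw n (i : ℕ) (by positivity)
  · rw [add_comm]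
    congr 1
    simp [wv_succ]

lemma Qv_wv (hO : ρ.InO) (n : ℕ) : ∃ r ∈ span ℂ (ρ.wv w₀ '' Set.Iic n),
    ρ.Qv a b' (ρ.wv w₀ n) = (-2 : ℂ) • ρ.wv w₀ (n + 1) + r := by
  obtain ⟨r, hr, hE⟩ := ρ.E1_wv b' w₀ hhw hO n
  refine ⟨(-1 : ℂ) • r + (a + b' + 1) • ρ.wv w₀ n, ?_, ?_⟩
  · exact add_mem (smul_mem _ _ hr) (smul_mem _ _ (subset_span ⟨n, Set.mem_Iic.2 le_rfl, rfl⟩))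
  · rw [Qv, hE, ← wv_succ]
    module

lemma Qv_mem_Iio (hO : ρ.InO) (n : ℕ) (v : W) (hv : v ∈ span ℂ (ρ.wv w₀ '' Set.Iio n)) :
    ρ.Qv a b' v ∈ span ℂ (ρ.wv w₀ '' Set.Iio (n + 1)) := by
  induction hv using Submodule.span_induction with
  | mem x hx =>
    obtain ⟨t, ht, rfl⟩ := hx
    simp only [Set.mem_Iio] at ht
    obtain ⟨r, hr, hQ⟩ := ρ.Qv_wv a b' w₀ hhw hO t
    rw [hQ]
    refine add_mem (smul_mem _ _ (subset_span ⟨t + 1, by simp only [Set.mem_Iio]; omega, rfl⟩)) ?_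
    exact span_mono (Set.image_mono (fun u hu => by
      simp only [Set.mem_Iic] at hu; simp only [Set.mem_Iio]; omega)) hr
  | zero => rw [ρ.Qv_zero]; simp
  | add x y _ _ hx hy => rw [ρ.Qv_add a b' hO]; exact add_mem hx hy
  | smul c x _ hx => rw [ρ.Qv_smul a b' hO]; exact smul_mem _ c hx

lemma Yv_tri (hO : ρ.InO) : ∀ (i : ℕ) (m : ℤ), ∃ r ∈ span ℂ (ρ.wv w₀ '' Set.Iio i),
    ρ.Yv a b' w₀ i m = ((-2 : ℂ) ^ i) • ρ.wv w₀ i + r := by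
  intro i
  induction i with
  | zero =>
    intro m
    exact ⟨0, zero_mem _, by rw [show ρ.Yv a b' w₀ 0 m = w₀ from rfl, show ρ.wv w₀ 0 = w₀ from rfl]; simp⟩
  | succ k ih =>
    intro m
    obtain ⟨r, hr, hY⟩ := ih (m - 1)
    obtain ⟨r₂, hr₂, hQ⟩ := ρ.Qv_wv a b' w₀ hhw hO k
    refine ⟨((-2 : ℂ) ^ k) • r₂ + ρ.Qv a b' r + ((m - 1 : ℤ) : ℂ) • (((-2 : ℂ) ^ k) • ρ.wv w₀ k + r),
      ?_, ?_⟩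
    · refine add_mem (add_mem (smul_mem _ _ ?_) ?_) (smul_mem _ _ (add_mem (smul_mem _ _ ?_) ?_))
      · exact span_mono (Set.image_mono (fun u hu => by
          simp only [Set.mem_Iic] at hu; simp only [Set.mem_Iio]; omega)) hr₂
      · exact ρ.Qv_mem_Iio a b' w₀ hhw hO k r hr
      · exact subset_span ⟨k, by simp only [Set.mem_Iio]; omega, rfl⟩
      · exact span_mono (Set.image_mono (fun u hu => by
          simp only [Set.mem_Iio] at hu ⊢; omega)) hr
    · rw [Yv, hY, ρ.Qv_add a b' hO, ρ.Qv_smul a b' hO, hQ]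
      rw [pow_succ]
      module

lemma Yv_mem_Iic (hO : ρ.InO) (i : ℕ) (m : ℤ) :
    ρ.Yv a b' w₀ i m ∈ span ℂ (ρ.wv w₀ '' Set.Iic i) := by
  obtain ⟨r, hr, hY⟩ := ρ.Yv_tri a b' w₀ hhw hO i m
  rw [hY]
  refine add_mem (smul_mem _ _ (subset_span ⟨i, Set.mem_Iic.2 le_rfl, rfl⟩)) ?_
  exact span_mono (Set.image_mono Set.Iio_subset_Iic_self) hr

end HW

end WittRep
namespace WittRep

open Finset Submodule

variable {W : Type*} [AddCommGroup W] [Module ℂ W]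
variable (ρ : WittRep W) (a b' : ℂ) (w₀ : W)

lemma Yv_zero_eq (m : ℤ) : ρ.Yv a b' w₀ 0 m = w₀ := rfl

lemma Yv_li (hO : ρ.InO) (hb' : b' ≠ 0) (hhw : ρ.IsHW w₀ b') (m : ℤ) :
    LinearIndependent ℂ (fun i => ρ.Yv a b' w₀ i m) := by
  have hwli := ρ.wv_li b' w₀ hb' hhw
  apply li_of_ranges
  intro N
  induction N with
  | zero =>
    intro β hβ i hi
    interval_cases i
    have h0 : β 0 • ρ.Yv a b' w₀ 0 m = 0 := by simpa using hβ
    rw [Yv_zero_eq] at h0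
    exact (smul_eq_zero.1 h0).resolve_right hhw.1
  | succ N IH =>
    intro β hβ
    have htop : β (N + 1) = 0 := by
      by_contra hne
      obtain ⟨r, hr, hY⟩ := ρ.Yv_tri a b' w₀ hhw hO (N + 1) m
      rw [Finset.sum_range_succ, hY] at hβ
      have h2 : (β (N + 1) * (-2 : ℂ) ^ (N + 1)) • ρ.wv w₀ (N + 1)
          = -(β (N + 1) • r) - (∑ i ∈ Finset.range (N + 1), β i • ρ.Yv a b' w₀ i m) := by
        linear_combination (norm := module) hβ
      have hmem : (β (N + 1) * (-2 : ℂ) ^ (N + 1)) • ρ.wv w₀ (N + 1)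
          ∈ span ℂ (ρ.wv w₀ '' Set.Iio (N + 1)) := by
        rw [h2]
        refine sub_mem (neg_mem (smul_mem _ _ hr)) (sum_mem ?_)
        intro i hi
        apply smul_mem
        refine span_mono (Set.image_mono (fun u hu => ?_)) (ρ.Yv_mem_Iic a b' w₀ hhw hO i m)
        simp only [Set.mem_Iic] at hu
        simp only [Set.mem_Iio]
        have := Finset.mem_range.1 hi
        omega
      have hc : (β (N + 1) * (-2 : ℂ) ^ (N + 1)) ≠ 0 :=
        mul_ne_zero hne (pow_ne_zero _ (by norm_num))
      have hx := smul_mem (span ℂ (ρ.wv w₀ '' Set.Iio (N + 1)))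
        ((β (N + 1) * (-2 : ℂ) ^ (N + 1))⁻¹) hmem
      rw [smul_smul, inv_mul_cancel₀ hc, one_smul] at hx
      exact hwli.notMem_span_image (by simp : (N + 1 : ℕ) ∉ Set.Iio (N + 1)) hx
    have hβ' : ∑ i ∈ Finset.range (N + 1), β i • ρ.Yv a b' w₀ i m = 0 := by
      rw [Finset.sum_range_succ, htop, zero_smul, add_zero] at hβ
      exact hβ
    intro i hi
    rcases Nat.lt_succ_iff_lt_or_eq.1 (Nat.lt_succ_of_le hi) with h | h
    · exact IH β hβ' i (by omega)
    · rw [h]; exact htop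

lemma Yv_span (hO : ρ.InO) (hhw : ρ.IsHW w₀ b') (hgen : ρ.Generates w₀) (m : ℤ) :
    span ℂ (Set.range fun i => ρ.Yv a b' w₀ i m) = ⊤ := by
  rw [eq_top_iff, ← ρ.span_wv_eq_top b' w₀ hhw hgen, span_le]
  rintro x ⟨n, rfl⟩
  induction n using Nat.strong_induction_on with
  | _ n IH =>
    obtain ⟨r, hr, hY⟩ := ρ.Yv_tri a b' w₀ hhw hO n m
    have hrSP : r ∈ span ℂ (Set.range fun i => ρ.Yv a b' w₀ i m) := by
      refine span_le.2 ?_ hr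
      rintro x ⟨t, ht, rfl⟩
      simp only [Set.mem_Iio] at ht
      exact IH t ht
    have heq : ρ.wv w₀ n = ((-2 : ℂ) ^ n)⁻¹ • (ρ.Yv a b' w₀ n m - r) := by
      rw [hY, add_sub_cancel_right, smul_smul, inv_mul_cancel₀ (pow_ne_zero _ (by norm_num)),
        one_smul]
    rw [SetLike.mem_coe, heq]
    exact smul_mem _ _ (sub_mem (subset_span ⟨n, rfl⟩) hrSP)

end WittRep
namespace WittRep

open Finset Submodule

variable {W : Type*} [AddCommGroup W] [Module ℂ W]
variable (ρ : WittRep W) (a b' : ℂ) (w₀ : W)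

/-- The generating set of `L_ε`. -/
def LgenSet (ε : ℤ) : Set (ℤ →₀ W) :=
  {g | ∃ (i : ℕ) (j : ℤ), g = (ρ.Lact (-1) a (b' + 1) 1)^[i] (Finsupp.single (2 * j + ε) w₀)}

lemma Lzero_eq : ρ.Lzero a b' w₀ = span ℂ (ρ.LgenSet a b' w₀ 0) := by
  unfold Lzero LgenSet
  congr 1
  ext g
  simp only [Set.mem_setOf_eq, add_zero]

lemma Lone_eq : ρ.Lone a b' w₀ = span ℂ (ρ.LgenSet a b' w₀ 1) := rfl

lemma lact_maps_span (hO : ρ.InO) (k : ℤ) (s : Set (ℤ →₀ W)) (T : Submodule ℂ (ℤ →₀ W))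
    (h : ∀ g ∈ s, ρ.Lact (-1) a (b' + 1) k g ∈ T) :
    ∀ u ∈ span ℂ s, ρ.Lact (-1) a (b' + 1) k u ∈ T := by
  intro u hu
  rw [Lact_eq_LactL ρ hO] at h ⊢
  induction hu using Submodule.span_induction with
  | mem x hx => exact h x hx
  | zero => rw [map_zero]; exact zero_mem _
  | add x y _ _ hx hy => rw [map_add]; exact add_mem hx hy
  | smul c x _ hx => rw [map_smul]; exact smul_mem _ c hx

section Main

variable (hO : ρ.InO) (hb' : b' ≠ 0) (hhw : ρ.IsHW w₀ b')

include hhw in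
lemma E_w0 (k : ℤ) : ρ.E k w₀ = ρ.d (-1) w₀ + ((k : ℂ) * b') • w₀ := by
  rw [ρ.E_eq_sum k w₀ 1 (fun i hi => hhw.2.2 i hi), Finset.sum_range_succ,
    Finset.sum_range_one]
  have h0 : ((0 : ℕ) : ℤ) - 1 = -1 := by norm_num
  have h1 : ((1 : ℕ) : ℤ) - 1 = 0 := by norm_num
  rw [h0, h1, hhw.2.1]
  norm_num [Nat.factorial, smul_smul]

include hO hhw in
lemma lact_base_mem (ε : ℤ) (k j : ℤ) :
    ρ.Lact (-1) a (b' + 1) k (Finsupp.single (2 * j + ε) w₀)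
      ∈ span ℂ (ρ.LgenSet a b' w₀ ε) := by
  rcases Int.even_or_odd k with hk | hk
  · -- even k : a scalar multiple of a degree-shifted generator
    obtain ⟨t, ht⟩ := hk
    have heq : ρ.Lact (-1) a (b' + 1) k (Finsupp.single (2 * j + ε) w₀)
        = (a + 2 * (k : ℂ) * b' + (k : ℂ) + ((2 * j + ε : ℤ) : ℂ)) •
            Finsupp.single (2 * (j + t) + ε) w₀ := by
      rw [ρ.lact_single hO, ρ.E_w0 b' w₀ hhw k, Even.neg_one_zpow ⟨t, ht⟩, one_smul,
        Finsupp.smul_single]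
      have hidx : k + (2 * j + ε) = 2 * (j + t) + ε := by omega
      rw [hidx]
      congr 1
      push_cast
      module
    rw [heq]
    refine smul_mem _ _ (subset_span ⟨0, j + t, ?_⟩)
    simp
  · -- odd k : equals `d_1` applied to a generator
    obtain ⟨t, ht⟩ := hk
    have heq : ρ.Lact (-1) a (b' + 1) k (Finsupp.single (2 * j + ε) w₀)
        = (ρ.Lact (-1) a (b' + 1) 1)^[1] (Finsupp.single (2 * (j + t) + ε) w₀) := by
      rw [Function.iterate_one, ρ.lact_single hO, ρ.lact_single hO,
        ρ.E_w0 b' w₀ hhw k, ρ.E_w0 b' w₀ hhw 1, Odd.neg_one_zpow ⟨t, ht⟩, zpow_one]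
      have hidx : k + (2 * j + ε) = 1 + (2 * (j + t) + ε) := by omega
      rw [hidx]
      congr 1
      have hkc : (k : ℂ) = 2 * (t : ℂ) + 1 := by exact_mod_cast congrArg (Int.cast (R := ℂ)) ht
      rw [hkc]
      push_cast
      module
    rw [heq]
    exact subset_span ⟨1, j + t, rfl⟩

include hO hhw in
lemma lact_one_maps (ε : ℤ) :
    ∀ u ∈ span ℂ (ρ.LgenSet a b' w₀ ε),
      ρ.Lact (-1) a (b' + 1) 1 u ∈ span ℂ (ρ.LgenSet a b' w₀ ε) := by
  apply ρ.lact_maps_span a b' hO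
  rintro g ⟨i, j, rfl⟩
  refine subset_span ⟨i + 1, j, ?_⟩
  rw [Function.iterate_succ_apply']

include hO hhw in
lemma lact_iter_mem (ε : ℤ) : ∀ (i : ℕ) (k j : ℤ),
    ρ.Lact (-1) a (b' + 1) k ((ρ.Lact (-1) a (b' + 1) 1)^[i] (Finsupp.single (2 * j + ε) w₀))
      ∈ span ℂ (ρ.LgenSet a b' w₀ ε) := by
  intro i
  induction i with
  | zero =>
    intro k j
    simpa using ρ.lact_base_mem a b' w₀ hO hhw ε k j
  | succ i IH =>
    intro k j
    rw [Function.iterate_succ_apply']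
    set u := (ρ.Lact (-1) a (b' + 1) 1)^[i] (Finsupp.single (2 * j + ε) w₀) with hu
    have hcomm := ρ.lact_comm hO (-1) a (b' + 1) (by norm_num) k 1 u
    have h2 := sub_eq_iff_eq_add'.1 hcomm
    rw [h2]
    refine add_mem (ρ.lact_one_maps a b' w₀ hO hhw ε _ (IH k j)) (smul_mem _ _ ?_)
    exact IH (k + 1) j

include hO hhw in
lemma lgen_invariant (ε : ℤ) (k : ℤ) :
    ∀ u ∈ span ℂ (ρ.LgenSet a b' w₀ ε),
      ρ.Lact (-1) a (b' + 1) k u ∈ span ℂ (ρ.LgenSet a b' w₀ ε) := by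
  apply ρ.lact_maps_span a b' hO
  rintro g ⟨i, j, rfl⟩
  exact ρ.lact_iter_mem a b' w₀ hO hhw ε i k j

end Main

end WittRep
namespace WittRep

open Finset Submodule

variable {W : Type*} [AddCommGroup W] [Module ℂ W]
variable (ρ : WittRep W) (a b' : ℂ) (w₀ : W)
variable (hO : ρ.InO) (hb' : b' ≠ 0) (hhw : ρ.IsHW w₀ b') (hgen : ρ.Generates w₀)

include hO hhw hgen in
lemma single_mem_sup (m : ℤ) (v : W) :
    Finsupp.single m v ∈ span ℂ (ρ.LgenSet a b' w₀ 0) ⊔ span ℂ (ρ.LgenSet a b' w₀ 1) := by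
  have hv : v ∈ span ℂ (Set.range fun i => ρ.Yv a b' w₀ i m) := by
    rw [ρ.Yv_span a b' w₀ hO hhw hgen m]
    trivial
  have hmap : Finsupp.single m v
      ∈ Submodule.map (Finsupp.lsingle (R := ℂ) m)
          (span ℂ (Set.range fun i => ρ.Yv a b' w₀ i m)) := ⟨v, hv, rfl⟩
  rw [Submodule.map_span] at hmap
  refine span_le.2 ?_ hmap
  rintro x ⟨y, ⟨i, rfl⟩, rfl⟩
  have hiter := ρ.lact_iterate a b' w₀ hO i (m - (i : ℕ))
  rw [show m - ((i : ℕ) : ℤ) + ((i : ℕ) : ℤ) = m by ring] at hiter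
  rcases Int.even_or_odd (m - (i : ℕ)) with ⟨t, ht⟩ | ⟨t, ht⟩
  · apply Submodule.mem_sup_left
    refine subset_span ⟨i, t, ?_⟩
    have h2 : (2 * t + 0 : ℤ) = m - (i : ℕ) := by omega
    rw [h2, hiter]
    rfl
  · apply Submodule.mem_sup_right
    refine subset_span ⟨i, t, ?_⟩
    have h2 : (2 * t + 1 : ℤ) = m - (i : ℕ) := by omega
    rw [h2, hiter]
    rfl

include hO hhw hgen in
lemma lgen_sup_eq_top :
    span ℂ (ρ.LgenSet a b' w₀ 0) ⊔ span ℂ (ρ.LgenSet a b' w₀ 1) = ⊤ := by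
  rw [eq_top_iff]
  intro f hf
  clear hf
  induction f using Finsupp.induction_linear with
  | zero => exact zero_mem _
  | add f g hf hg => exact add_mem hf hg
  | single m v => exact ρ.single_mem_sup a b' w₀ hO hhw hgen m v

include hO hhw in
lemma apply_mem_span_parity (ε : ℤ) (f : ℤ →₀ W) (hf : f ∈ span ℂ (ρ.LgenSet a b' w₀ ε))
    (m : ℤ) : f m ∈ span ℂ ((fun i : ℕ => ρ.Yv a b' w₀ i m) ''
      {i : ℕ | ∃ j : ℤ, m - (i : ℕ) = 2 * j + ε}) := by
  induction hf using Submodule.span_induction with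
  | mem g hg =>
    obtain ⟨i, j, rfl⟩ := hg
    rw [ρ.lact_iterate a b' w₀ hO i (2 * j + ε), Finsupp.single_apply]
    split_ifs with h
    · rw [h]
      exact subset_span ⟨i, ⟨j, by omega⟩, rfl⟩
    · exact zero_mem _
  | zero => exact zero_mem _
  | add x y _ _ hx hy => rw [Finsupp.add_apply]; exact add_mem hx hy
  | smul c x _ hx => rw [Finsupp.smul_apply]; exact smul_mem _ c hx

include hO hb' hhw in
lemma lgen_inf_eq_bot :
    span ℂ (ρ.LgenSet a b' w₀ 0) ⊓ span ℂ (ρ.LgenSet a b' w₀ 1) = ⊥ := by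
  rw [eq_bot_iff]
  intro f hf
  rw [Submodule.mem_inf] at hf
  rw [Submodule.mem_bot]
  ext m
  have h0 := ρ.apply_mem_span_parity a b' w₀ hO hhw 0 f hf.1 m
  have h1 := ρ.apply_mem_span_parity a b' w₀ hO hhw 1 f hf.2 m
  have hdisj : Disjoint (span ℂ ((fun i : ℕ => ρ.Yv a b' w₀ i m) ''
        {i : ℕ | ∃ j : ℤ, m - (i : ℕ) = 2 * j + 0}))
      (span ℂ ((fun i : ℕ => ρ.Yv a b' w₀ i m) ''
        {i : ℕ | ∃ j : ℤ, m - (i : ℕ) = 2 * j + 1})) := by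
    apply (ρ.Yv_li a b' w₀ hO hb' hhw m).disjoint_span_image
    rw [Set.disjoint_left]
    rintro i ⟨j₀, hj₀⟩ ⟨j₁, hj₁⟩
    omega
  have := Submodule.disjoint_def.1 hdisj (f m) h0 h1
  simpa using this

end WittRep

theorem stmt9 {W : Type*} [AddCommGroup W] [Module ℂ W] (ρ : WittRep W)
    (hO : ρ.InO) (a b' : ℂ) (hb' : b' ≠ 0)
    (w₀ : W) (hhw : ρ.IsHW w₀ b') (hgen : ρ.Generates w₀) :
    (∀ k : ℤ, ∀ u ∈ ρ.Lzero a b' w₀, ρ.Lact (-1) a (b' + 1) k u ∈ ρ.Lzero a b' w₀) ∧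
    (∀ k : ℤ, ∀ u ∈ ρ.Lone a b' w₀, ρ.Lact (-1) a (b' + 1) k u ∈ ρ.Lone a b' w₀) ∧
    ρ.Lzero a b' w₀ ⊔ ρ.Lone a b' w₀ = ⊤ ∧
    ρ.Lzero a b' w₀ ⊓ ρ.Lone a b' w₀ = ⊥ := by
  refine ⟨?_, ?_, ?_, ?_⟩
  · intro k u hu
    rw [ρ.Lzero_eq a b' w₀] at hu ⊢
    exact ρ.lgen_invariant a b' w₀ hO hhw 0 k u hu
  · intro k u hu
    rw [ρ.Lone_eq a b' w₀] at hu ⊢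
    exact ρ.lgen_invariant a b' w₀ hO hhw 1 k u hu
  · rw [ρ.Lzero_eq a b' w₀, ρ.Lone_eq a b' w₀]
    exact ρ.lgen_sup_eq_top a b' w₀ hO hhw hgen
  · rw [ρ.Lzero_eq a b' w₀, ρ.Lone_eq a b' w₀]
    exact ρ.lgen_inf_eq_bot a b' w₀ hO hb' hhw
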